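/- Two words w and w' are in the same commutation class if and only if P(w) and P(w') are isomorphic as labeled posets. Consequently, w ↦ P(w) induces a bijection between commutation classes of words and isomorphism classes of word posets. -/

import Mathlib

def CommMove {S : Type*} (comm : S → S → Prop) (w w' : List S) : Prop :=
  ∃ (u v : List S) (a b : S), comm a b ∧ w = u ++ a :: b :: v ∧ w' = u ++ b :: a :: v

def CommClass {S : Type*} (comm : S → S → Prop) : List S → List S → Prop :=
  Relation.ReflTransGen (CommMove comm)

def WStep {S : Type*} (comm : S → S → Prop) (w : List S) (i j : Fin w.length) : Prop :=
  i ≤ j ∧ (w.get i = w.get j ∨ ¬ comm (w.get i) (w.get j))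

/-- The word-poset order `≤_w` on positions of `w`. -/
def WLe {S : Type*} (comm : S → S → Prop) (w : List S) : Fin w.length → Fin w.length → Prop :=
  Relation.TransGen (WStep comm w)

namespace WordPosetAux

variable {S : Type*} {comm : S → S → Prop}

lemma wle_le {w : List S} {i j : Fin w.length} (h : WLe comm w i j) : i ≤ j := by
  induction h with
  | single h => exact h.1
  | tail _ h ih => exact le_trans ih h.1

lemma wle_map {w w' : List S} (f : Fin w.length → Fin w'.length)
    (hf : ∀ i j, WStep comm w i j → WStep comm w' (f i) (f j)) {i j : Fin w.length}
    (h : WLe comm w i j) : WLe comm w' (f i) (f j) := by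
  induction h with
  | single h => exact Relation.TransGen.single (hf _ _ h)
  | tail _ h ih => exact ih.tail (hf _ _ h)

/-- labeled poset isomorphism -/
def Iso (comm : S → S → Prop) (w w' : List S) : Prop :=
  ∃ f : Fin w.length → Fin w'.length, Function.Bijective f ∧
    (∀ i j, WLe comm w i j ↔ WLe comm w' (f i) (f j)) ∧
    (∀ i, w'.get (f i) = w.get i)

lemma iso_refl (w : List S) : Iso comm w w :=
  ⟨id, Function.bijective_id, fun _ _ => Iff.rfl, fun _ => rfl⟩

lemma iso_trans {w₁ w₂ w₃ : List S} (h1 : Iso comm w₁ w₂) (h2 : Iso comm w₂ w₃) :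
    Iso comm w₁ w₃ := by
  obtain ⟨f, hf, hle, hget⟩ := h1
  obtain ⟨g, hg, gle, gget⟩ := h2
  exact ⟨g ∘ f, hg.comp hf, fun i j => (hle i j).trans (gle _ _),
    fun i => (gget _).trans (hget _)⟩

/-! ### getElem computations for the middle of `u ++ a :: b :: v` -/

lemma getElem_append_middle₁ (u v : List S) (a b : S) {k : ℕ} (hk : k = u.length)
    {h : k < (u ++ a :: b :: v).length} : (u ++ a :: b :: v)[k] = a := by
  subst hk
  rw [List.getElem_append_right le_rfl]
  simp

lemma getElem_append_middle₂ (u v : List S) (a b : S) {k : ℕ} (hk : k = u.length + 1)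
    {h : k < (u ++ a :: b :: v).length} : (u ++ a :: b :: v)[k] = b := by
  subst hk
  rw [List.getElem_append_right (by omega)]
  simp only [show u.length + 1 - u.length = 1 from by omega]
  simp

lemma getElem_append_middle₃ (u v : List S) (a b a' b' : S) {k : ℕ} (hk : u.length + 1 < k)
    {h : k < (u ++ a :: b :: v).length} {h' : k < (u ++ a' :: b' :: v).length} :
    (u ++ a :: b :: v)[k] = (u ++ a' :: b' :: v)[k] := by
  rw [List.getElem_append_right (by omega), List.getElem_append_right (by omega)]
  obtain ⟨m, hm⟩ : ∃ m, k - u.length = m + 2 := ⟨k - u.length - 2, by omega⟩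
  simp only [hm]
  simp

/-! ### the swap bijection of a single commutation move -/

def swapFin (u v : List S) (a b : S) (i : Fin (u ++ a :: b :: v).length) :
    Fin (u ++ b :: a :: v).length :=
  ⟨if i.val = u.length then u.length + 1 else if i.val = u.length + 1 then u.length else i.val, by
    have hi := i.isLt
    simp only [List.length_append, List.length_cons] at hi ⊢
    split_ifs <;> omega⟩

lemma swapFin_val (u v : List S) (a b : S) (i : Fin (u ++ a :: b :: v).length) :
    (swapFin u v a b i).val =
      if i.val = u.length then u.length + 1 else if i.val = u.length + 1 then u.length
        else i.val := rfl

lemma swapFin_swapFin (u v : List S) (a b : S) (i : Fin (u ++ a :: b :: v).length) :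
    swapFin u v b a (swapFin u v a b i) = i := by
  apply Fin.ext
  simp only [swapFin_val]
  split_ifs <;> omega

lemma swapFin_get (u v : List S) (a b : S) (i : Fin (u ++ a :: b :: v).length) :
    (u ++ b :: a :: v).get (swapFin u v a b i) = (u ++ a :: b :: v).get i := by
  have hi := i.isLt
  simp only [List.length_append, List.length_cons] at hi
  simp only [List.get_eq_getElem]
  rcases Nat.lt_trichotomy i.val u.length with h | h | h
  · have hv : (swapFin u v a b i).val = i.val := by rw [swapFin_val]; split_ifs <;> omega
    simp only [hv]
    rw [List.getElem_append_left h, List.getElem_append_left h]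
  · have hv : (swapFin u v a b i).val = u.length + 1 := by rw [swapFin_val]; split_ifs <;> omega
    simp only [hv]
    rw [getElem_append_middle₂ u v b a rfl, getElem_append_middle₁ u v a b h]
  · by_cases h2 : i.val = u.length + 1
    · have hv : (swapFin u v a b i).val = u.length := by rw [swapFin_val]; split_ifs <;> omega
      simp only [hv]
      rw [getElem_append_middle₁ u v b a rfl, getElem_append_middle₂ u v a b h2]
    · have h3 : u.length + 1 < i.val := by omega
      have hv : (swapFin u v a b i).val = i.val := by rw [swapFin_val]; split_ifs <;> omega
      simp only [hv]
      exact getElem_append_middle₃ u v b a a b h3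

lemma swap_step (hirr : ∀ a, ¬ comm a a) {u v : List S} {a b : S} (hab : comm a b)
    (i j : Fin (u ++ a :: b :: v).length) (h : WStep comm (u ++ a :: b :: v) i j) :
    WStep comm (u ++ b :: a :: v) (swapFin u v a b i) (swapFin u v a b j) := by
  obtain ⟨hij, hlab⟩ := h
  rw [Fin.le_def] at hij
  by_cases hij2 : i.val = u.length ∧ j.val = u.length + 1
  · exfalso
    have ha : (u ++ a :: b :: v).get i = a := by
      rw [List.get_eq_getElem]; exact getElem_append_middle₁ u v a b hij2.1
    have hb : (u ++ a :: b :: v).get j = b := by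
      rw [List.get_eq_getElem]; exact getElem_append_middle₂ u v a b hij2.2
    rw [ha, hb] at hlab
    rcases hlab with he | hc
    · rw [he] at hab; exact hirr b hab
    · exact hc hab
  · constructor
    · rw [Fin.le_def, swapFin_val, swapFin_val]
      split_ifs <;> omega
    · rw [swapFin_get, swapFin_get]
      exact hlab

lemma commMove_iso (hsym : ∀ a b, comm a b → comm b a) (hirr : ∀ a, ¬ comm a a)
    {w w' : List S} (h : CommMove comm w w') : Iso comm w w' := by
  obtain ⟨u, v, a, b, hab, rfl, rfl⟩ := h
  refine ⟨swapFin u v a b, ?_, ?_, swapFin_get u v a b⟩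
  · exact Function.bijective_iff_has_inverse.mpr
      ⟨swapFin u v b a, swapFin_swapFin u v a b, swapFin_swapFin u v b a⟩
  · intro i j
    constructor
    · exact wle_map _ (swap_step hirr hab)
    · intro h'
      have h2 := wle_map _ (swap_step hirr (hsym a b hab)) h'
      rwa [swapFin_swapFin, swapFin_swapFin] at h2

lemma commClass_iso (hsym : ∀ a b, comm a b → comm b a) (hirr : ∀ a, ¬ comm a a)
    {w w' : List S} (h : CommClass comm w w') : Iso comm w w' := by
  induction h with
  | refl => exact iso_refl w
  | tail _ hmove ih => exact iso_trans ih (commMove_iso hsym hirr hmove)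

/-! ### commutation moves under cons, and bubbling a minimal letter to the front -/

lemma commClass_cons {w w' : List S} (c : S) (h : CommClass comm w w') :
    CommClass comm (c :: w) (c :: w') := by
  refine Relation.ReflTransGen.lift (c :: ·) ?_ _ _ h
  rintro x y ⟨u, v, a, b, hab, rfl, rfl⟩
  exact ⟨c :: u, v, a, b, hab, rfl, rfl⟩

lemma bubble (u v : List S) (a : S) (h : ∀ x ∈ u, comm x a) :
    CommClass comm (u ++ a :: v) (a :: (u ++ v)) := by
  induction u with
  | nil => exact Relation.ReflTransGen.refl
  | cons c u ih =>
    have h1 : CommClass comm (u ++ a :: v) (a :: (u ++ v)) :=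
      ih fun x hx => h x (List.mem_cons_of_mem _ hx)
    have h2 : CommClass comm (c :: (u ++ a :: v)) (c :: a :: (u ++ v)) := commClass_cons c h1
    have h3 : CommMove comm (c :: a :: (u ++ v)) (a :: c :: (u ++ v)) :=
      ⟨[], u ++ v, c, a, h c (List.mem_cons_self (a := c) (l := u)), rfl, rfl⟩
    exact h2.trans (Relation.ReflTransGen.single h3)

lemma take_get_drop (w : List S) (x : Fin w.length) :
    w = w.take x.val ++ w.get x :: w.drop (x.val + 1) := by
  conv_lhs => rw [← List.take_append_drop x.val w]
  congr 1
  rw [List.get_eq_getElem]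
  exact (List.getElem_cons_drop (as := w) (i := x.val) (h := x.isLt)).symm

/-! ### the embedding of positions of `w.eraseIdx x` into positions of `w` -/

def eIdx (w : List S) (x : Fin w.length) (i : Fin (w.eraseIdx x.val).length) : Fin w.length :=
  ⟨if i.val < x.val then i.val else i.val + 1, by
    have h1 := lt_of_lt_of_eq i.isLt (List.length_eraseIdx_of_lt x.isLt)
    have h2 := x.isLt
    split <;> omega⟩

lemma eIdx_val (w : List S) (x : Fin w.length) (i : Fin (w.eraseIdx x.val).length) :
    (eIdx w x i).val = if i.val < x.val then i.val else i.val + 1 := rfl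

lemma eIdx_ne (w : List S) (x : Fin w.length) (i : Fin (w.eraseIdx x.val).length) :
    eIdx w x i ≠ x := by
  intro h
  have h2 := congrArg Fin.val h
  rw [eIdx_val] at h2
  split_ifs at h2 <;> omega

lemma eIdx_inj (w : List S) (x : Fin w.length) : Function.Injective (eIdx w x) := by
  intro i j h
  have h2 := congrArg Fin.val h
  rw [eIdx_val, eIdx_val] at h2
  apply Fin.ext
  split_ifs at h2 <;> omega

lemma eIdx_surj (w : List S) (x : Fin w.length) (i : Fin w.length) (h : i ≠ x) :
    ∃ j, eIdx w x j = i := by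
  have hne : i.val ≠ x.val := fun hv => h (Fin.ext hv)
  have hx := x.isLt
  have hi := i.isLt
  refine ⟨⟨if i.val < x.val then i.val else i.val - 1, ?_⟩, ?_⟩
  · rw [List.length_eraseIdx_of_lt x.isLt]
    split <;> omega
  · apply Fin.ext
    rw [eIdx_val]
    simp only
    split_ifs <;> omega

lemma eIdx_get (w : List S) (x : Fin w.length) (i : Fin (w.eraseIdx x.val).length) :
    w.get (eIdx w x i) = (w.eraseIdx x.val).get i := by
  simp only [List.get_eq_getElem, List.getElem_eraseIdx]
  by_cases hc : i.val < x.val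
  · rw [dif_pos hc]
    simp only [show (eIdx w x i).val = i.val from by rw [eIdx_val]; exact if_pos hc]
  · rw [dif_neg hc]
    simp only [show (eIdx w x i).val = i.val + 1 from by rw [eIdx_val]; exact if_neg hc]

lemma eIdx_step_iff (comm : S → S → Prop) {w : List S} (x : Fin w.length)
    (i j : Fin (w.eraseIdx x.val).length) :
    WStep comm (w.eraseIdx x.val) i j ↔ WStep comm w (eIdx w x i) (eIdx w x j) := by
  unfold WStep
  rw [eIdx_get, eIdx_get]
  constructor
  · rintro ⟨h1, h2⟩
    refine ⟨?_, h2⟩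
    rw [Fin.le_def] at h1 ⊢
    rw [eIdx_val, eIdx_val]
    split_ifs <;> omega
  · rintro ⟨h1, h2⟩
    refine ⟨?_, h2⟩
    rw [Fin.le_def] at h1 ⊢
    rw [eIdx_val, eIdx_val] at h1
    split_ifs at h1 <;> omega

lemma eIdx_wle (comm : S → S → Prop) {w : List S} (x : Fin w.length)
    (hmin : ∀ j, WLe comm w j x → j = x) (i j : Fin (w.eraseIdx x.val).length) :
    WLe comm (w.eraseIdx x.val) i j ↔ WLe comm w (eIdx w x i) (eIdx w x j) := by
  constructor
  · exact wle_map _ fun i j h => (eIdx_step_iff comm x i j).mp h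
  · intro h
    have key : ∀ q : Fin w.length, WLe comm w (eIdx w x i) q →
        ∀ j, q = eIdx w x j → WLe comm (w.eraseIdx x.val) i j := by
      intro q h
      induction h with
      | single hs =>
        rintro j rfl
        exact Relation.TransGen.single ((eIdx_step_iff comm x i j).mpr hs)
      | @tail m q hpm hs ih =>
        rintro j rfl
        have hm : m ≠ x := fun hmx => eIdx_ne w x i (hmin _ (hmx ▸ hpm))
        obtain ⟨i', hi'⟩ := eIdx_surj w x m hm
        refine (ih i' hi'.symm).tail ((eIdx_step_iff comm x i' j).mpr ?_)
        rw [hi']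
        exact hs
    exact key _ h j rfl

/-- restricting a labeled-poset isomorphism to minimal positions erased -/
lemma erase_iso_of_iso {w w' : List S} (f : Fin w.length → Fin w'.length)
    (hf : Function.Bijective f)
    (hle : ∀ i j, WLe comm w i j ↔ WLe comm w' (f i) (f j))
    (hget : ∀ i, w'.get (f i) = w.get i)
    (x : Fin w.length) (x' : Fin w'.length) (hx : f x = x')
    (hmin : ∀ j, WLe comm w j x → j = x) (hmin' : ∀ j, WLe comm w' j x' → j = x') :
    Iso comm (w.eraseIdx x.val) (w'.eraseIdx x'.val) := by
  have hfe : ∀ i : Fin (w.eraseIdx x.val).length,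
      ∃ j : Fin (w'.eraseIdx x'.val).length, eIdx w' x' j = f (eIdx w x i) := by
    intro i
    apply eIdx_surj
    intro hc
    exact eIdx_ne w x i (hf.injective (hc.trans hx.symm))
  choose g hg using hfe
  have hginj : Function.Injective g := by
    intro i i' hgi
    apply eIdx_inj w x
    apply hf.injective
    rw [← hg i, ← hg i', hgi]
  have hgsurj : Function.Surjective g := by
    intro j
    obtain ⟨p, hp⟩ := hf.surjective (eIdx w' x' j)
    have hpx : p ≠ x := by
      intro hpe
      rw [hpe, hx] at hp
      exact eIdx_ne w' x' j hp.symm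
    obtain ⟨i, hi⟩ := eIdx_surj w x p hpx
    refine ⟨i, eIdx_inj w' x' ?_⟩
    rw [hg i, hi, hp]
  refine ⟨g, ⟨hginj, hgsurj⟩, ?_, ?_⟩
  · intro i j
    rw [eIdx_wle comm x hmin, hle, ← hg, ← hg, ← eIdx_wle comm x' hmin']
  · intro i
    rw [← eIdx_get w' x' (g i), hg i, hget, eIdx_get]

/-! ### the main backward induction -/

lemma iso_commClass (hirr : ∀ a, ¬ comm a a) :
    ∀ n (w w' : List S), w.length = n → Iso comm w w' → CommClass comm w w' := by
  intro n
  induction n with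
  | zero =>
    rintro w w' hw ⟨f, hf, -, -⟩
    have hcard := Fintype.card_of_bijective hf
    simp only [Fintype.card_fin] at hcard
    rw [List.length_eq_zero_iff.mp hw, List.length_eq_zero_iff.mp (by omega : w'.length = 0)]
    exact Relation.ReflTransGen.refl
  | succ n ih =>
    rintro w w' hw ⟨f, hf, hle, hget⟩
    have hcard := Fintype.card_of_bijective hf
    simp only [Fintype.card_fin] at hcard
    have h0 : (0 : ℕ) < w'.length := by omega
    obtain ⟨i0, hi0⟩ := hf.surjective ⟨0, h0⟩
    -- minimality of i0 in w
    have hmin : ∀ j, WLe comm w j i0 → j = i0 := by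
      intro j hj
      apply hf.injective
      have h2 : (f j).val ≤ (f i0).val := Fin.le_def.mp (wle_le ((hle j i0).mp hj))
      rw [hi0] at h2 ⊢
      exact Fin.ext (Nat.le_zero.mp h2)
    have hmin' : ∀ j, WLe comm w' j (⟨0, h0⟩ : Fin w'.length) → j = ⟨0, h0⟩ := by
      intro j hj
      exact Fin.ext (Nat.le_zero.mp (Fin.le_def.mp (wle_le hj)))
    have hcomm : ∀ j : Fin w.length, j.val < i0.val → comm (w.get j) (w.get i0) := by
      intro j hj
      by_contra hc
      have hstep : WStep comm w j i0 := ⟨by rw [Fin.le_def]; omega, Or.inr hc⟩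
      have h2 := hmin j (Relation.TransGen.single hstep)
      rw [h2] at hj
      exact lt_irrefl _ hj
    -- Step A : w is in the commutation class of (w.get i0) :: (w.eraseIdx i0)
    have htake : ∀ x ∈ w.take i0.val, comm x (w.get i0) := by
      intro x hx
      obtain ⟨k, hk, hkx⟩ := List.mem_iff_getElem.mp hx
      have hk2 : k < i0.val := by rw [List.length_take] at hk; omega
      have hk3 : k < w.length := by have := i0.isLt; omega
      have hx2 : x = w.get ⟨k, hk3⟩ := by
        rw [← hkx, List.get_eq_getElem]
        exact List.getElem_take
      rw [hx2]
      exact hcomm ⟨k, hk3⟩ hk2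
    have hA : CommClass comm w (w.get i0 :: w.eraseIdx i0.val) := by
      have hb := bubble (w.take i0.val) (w.drop (i0.val + 1)) (w.get i0) htake
      rw [← take_get_drop w i0, ← List.eraseIdx_eq_take_drop_succ] at hb
      exact hb
    -- Step B : the isomorphism restricted to the erased words
    have hiso2 : Iso comm (w.eraseIdx i0.val) (w'.eraseIdx (⟨0, h0⟩ : Fin w'.length).val) :=
      erase_iso_of_iso f hf hle hget i0 ⟨0, h0⟩ hi0 hmin hmin'
    have hulen : (w.eraseIdx i0.val).length = n := by
      rw [List.length_eraseIdx_of_lt i0.isLt]; omega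
    have hC := ih _ _ hulen hiso2
    -- Step C : w' = w.get i0 :: w'.eraseIdx 0
    have hW : w' = w.get i0 :: w'.eraseIdx (⟨0, h0⟩ : Fin w'.length).val := by
      have h1 := take_get_drop w' ⟨0, h0⟩
      rw [List.eraseIdx_eq_take_drop_succ]
      have h2 : w'.get (⟨0, h0⟩ : Fin w'.length) = w.get i0 := by
        rw [← hi0]; exact hget i0
      rw [← h2]
      simpa using h1
    rw [hW]
    exact hA.trans (commClass_cons _ hC)

end WordPosetAux

/-- Same commutation class iff the labeled word posets are isomorphic; this is the
bijection between commutation classes and isomorphism classes of word posets. -/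
theorem commClass_iff_isomorphic_word_posets {S : Type*} (comm : S → S → Prop)
    (hsym : ∀ a b, comm a b → comm b a) (hirr : ∀ a, ¬ comm a a) (w w' : List S) :
    CommClass comm w w' ↔
      ∃ f : Fin w.length → Fin w'.length, Function.Bijective f ∧
        (∀ i j, WLe comm w i j ↔ WLe comm w' (f i) (f j)) ∧
        (∀ i, w'.get (f i) = w.get i) := by
  constructor
  · exact WordPosetAux.commClass_iso hsym hirr
  · exact WordPosetAux.iso_commClass hirr w.length w w' rfl
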